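/- The supremum over all complex z of the kernels LinearMap.ker( Complex.cosh(z·b) • (1 : E_ℂ →ₗ[ℂ] E_ℂ) − (Complex.sinh(z·b)/b) • A_ℂ ) equals the whole space E_ℂ (i.e. this supremum of ℂ-submodules is ⊤) if and only if neither b nor −b is an eigenvalue of A. -/

import Mathlib

open scoped TensorProduct

open Complex in
/-- Auxiliary: if `μ` is an eigenvalue of `A` and the scalar `cosh(zb) - sinh(zb)/b * μ`
never vanishes, then the supremum of kernels is not the whole space. -/
private lemma aux_ne_top
    {E : Type*} [NormedAddCommGroup E] [InnerProductSpace ℝ E] [FiniteDimensional ℝ E]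
    (A : E →ₗ[ℝ] E) (hA : A.IsSymmetric) (b : ℝ) (μ : ℝ)
    (hμ : Module.End.HasEigenvalue A μ)
    (hne : ∀ z : ℂ, Complex.cosh (z * (b : ℂ)) - Complex.sinh (z * (b : ℂ)) / (b : ℂ) * (μ : ℂ) ≠ 0) :
    (⨆ z : ℂ, LinearMap.ker (Complex.cosh (z * (b : ℂ)) • (1 : ℂ ⊗[ℝ] E →ₗ[ℂ] ℂ ⊗[ℝ] E)
        - (Complex.sinh (z * (b : ℂ)) / (b : ℂ)) • LinearMap.baseChange ℂ A)) ≠ ⊤ := by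
  obtain ⟨x, hx⟩ := hμ.exists_hasEigenvector
  have hAx : A x = μ • x := hx.apply_eq_smul
  have hx0 : x ≠ 0 := hx.right
  -- the complexified inner-product-with-x functional
  set f : E →ₗ[ℝ] ℝ := innerₛₗ ℝ x with hf
  set φ : ℂ ⊗[ℝ] E →ₗ[ℂ] ℂ ⊗[ℝ] ℝ := LinearMap.baseChange ℂ f with hφ
  have key : ∀ w : ℂ ⊗[ℝ] E, φ (LinearMap.baseChange ℂ A w) = (μ : ℂ) • φ w := by
    intro w
    induction w using TensorProduct.induction_on with
    | zero => simp
    | tmul z y =>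
        have hfA : f (A y) = μ • f y := by
          simp only [hf, innerₛₗ_apply_apply]
          rw [← hA x y, hAx, real_inner_smul_left]
          simp [smul_eq_mul]
        simp only [hφ, LinearMap.baseChange_tmul, hfA, TensorProduct.tmul_smul]
        rw [← algebraMap_smul ℂ μ (z ⊗ₜ[ℝ] f y), Complex.coe_algebraMap]
    | add u v hu hv => simp [map_add, hu, hv, smul_add]
  have hker : ∀ z : ℂ, ∀ w ∈ LinearMap.ker (Complex.cosh (z * (b : ℂ)) • (1 : ℂ ⊗[ℝ] E →ₗ[ℂ] ℂ ⊗[ℝ] E)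
        - (Complex.sinh (z * (b : ℂ)) / (b : ℂ)) • LinearMap.baseChange ℂ A), φ w = 0 := by
    intro z w hw
    rw [LinearMap.mem_ker, LinearMap.sub_apply, LinearMap.smul_apply, LinearMap.smul_apply,
      Module.End.one_apply, sub_eq_zero] at hw
    have := congrArg φ hw
    rw [map_smul, map_smul, key] at this
    have h2 : (Complex.cosh (z * (b : ℂ)) - Complex.sinh (z * (b : ℂ)) / (b : ℂ) * (μ : ℂ)) • φ w = 0 := by
      rw [sub_smul, this, mul_smul]
      abel
    rcases smul_eq_zero.mp h2 with h | h
    · exact absurd h (hne z)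
    · exact h
  intro htop
  have hmem : (1 : ℂ) ⊗ₜ[ℝ] x ∈ (⨆ z : ℂ, LinearMap.ker (Complex.cosh (z * (b : ℂ)) • (1 : ℂ ⊗[ℝ] E →ₗ[ℂ] ℂ ⊗[ℝ] E)
        - (Complex.sinh (z * (b : ℂ)) / (b : ℂ)) • LinearMap.baseChange ℂ A)) := htop ▸ Submodule.mem_top
  have hφ0 : φ ((1 : ℂ) ⊗ₜ[ℝ] x) = 0 := by
    have hle : (⨆ z : ℂ, LinearMap.ker (Complex.cosh (z * (b : ℂ)) • (1 : ℂ ⊗[ℝ] E →ₗ[ℂ] ℂ ⊗[ℝ] E)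
        - (Complex.sinh (z * (b : ℂ)) / (b : ℂ)) • LinearMap.baseChange ℂ A)) ≤ LinearMap.ker φ := by
      refine iSup_le fun z => fun w hw => ?_
      exact LinearMap.mem_ker.mpr (hker z w hw)
    exact LinearMap.mem_ker.mp (hle hmem)
  have : φ ((1 : ℂ) ⊗ₜ[ℝ] x) = (1 : ℂ) ⊗ₜ[ℝ] (inner ℝ x x : ℝ) := by
    simp [hφ, hf, LinearMap.baseChange_tmul, innerₛₗ_apply_apply]
  rw [this] at hφ0
  have : ((inner ℝ x x : ℝ) • (1 : ℂ)) = 0 := by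
    have h := congrArg (TensorProduct.rid ℝ ℂ) hφ0
    rwa [TensorProduct.rid_tmul, (TensorProduct.rid ℝ ℂ).map_zero] at h
  have hxx : (inner ℝ x x : ℝ) ≠ 0 := inner_self_ne_zero.mpr hx0
  simp [smul_eq_zero, hxx] at this
  exact hx0 this

/-- Let `E` be a finite-dimensional real inner product space, `A` a self-adjoint
endomorphism of `E`, `b > 0`, `E_ℂ := ℂ ⊗[ℝ] E` and `A_ℂ := LinearMap.baseChange ℂ A`.  The
supremum over all complex `z` of the kernels `ker(cosh(z·b) • id − (sinh(z·b)/b) • A_ℂ)` equals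
the whole space `E_ℂ` if and only if neither `b` nor `−b` is an eigenvalue of `A`. -/
theorem iSup_ker_complexified_cosh_smul_sub_sinh_smul_eq_top_iff
    {E : Type*} [NormedAddCommGroup E] [InnerProductSpace ℝ E] [FiniteDimensional ℝ E]
    (A : E →ₗ[ℝ] E) (hA : A.IsSymmetric) (b : ℝ) (hb : 0 < b) :
    (⨆ z : ℂ, LinearMap.ker (Complex.cosh (z * (b : ℂ)) • (1 : ℂ ⊗[ℝ] E →ₗ[ℂ] ℂ ⊗[ℝ] E)
        - (Complex.sinh (z * (b : ℂ)) / (b : ℂ)) • LinearMap.baseChange ℂ A)) = ⊤ ↔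
      ¬ Module.End.HasEigenvalue A b ∧ ¬ Module.End.HasEigenvalue A (-b) := by
  have hb0 : (b : ℂ) ≠ 0 := Complex.ofReal_ne_zero.mpr hb.ne'
  constructor
  · intro htop
    constructor
    · intro hE
      refine aux_ne_top A hA b b hE (fun z => ?_) htop
      have : Complex.cosh (z * b) - Complex.sinh (z * b) / b * b
          = Complex.exp (-(z * b)) := by
        rw [div_mul_cancel₀ _ hb0, Complex.cosh, Complex.sinh]
        ring
      rw [this]
      exact Complex.exp_ne_zero _
    · intro hE
      refine aux_ne_top A hA b (-b) hE (fun z => ?_) htop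
      have : Complex.cosh (z * b) - Complex.sinh (z * b) / b * (-b : ℝ)
          = Complex.exp (z * b) := by
        push_cast
        rw [mul_neg, div_mul_cancel₀ _ hb0, Complex.cosh, Complex.sinh]
        ring
      rw [this]
      exact Complex.exp_ne_zero _
  · rintro ⟨h₁, h₂⟩
    rw [eq_top_iff]
    intro w hw
    clear hw
    induction w using TensorProduct.induction_on with
    | zero => exact Submodule.zero_mem _
    | add u v hu hv => exact Submodule.add_mem _ hu hv
    | tmul z x =>
      -- x lies in the sup of eigenspaces
      have hdecomp : (⨆ μ : ℝ, Module.End.eigenspace A μ) = ⊤ := by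
        rw [← Submodule.orthogonal_eq_bot_iff]
        exact hA.orthogonalComplement_iSup_eigenspaces_eq_bot
      have hx : x ∈ ⨆ μ : ℝ, Module.End.eigenspace A μ := hdecomp ▸ Submodule.mem_top
      refine Submodule.iSup_induction (motive := fun y => z ⊗ₜ[ℝ] y ∈
        (⨆ z : ℂ, LinearMap.ker (Complex.cosh (z * (b : ℂ)) • (1 : ℂ ⊗[ℝ] E →ₗ[ℂ] ℂ ⊗[ℝ] E)
          - (Complex.sinh (z * (b : ℂ)) / (b : ℂ)) • LinearMap.baseChange ℂ A)))
        (fun μ : ℝ => Module.End.eigenspace A μ) hx ?_ ?_ ?_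
      · intro μ y hy
        rcases eq_or_ne y 0 with rfl | hy0
        · simp
        · have hμE : Module.End.HasEigenvalue A μ :=
            Module.End.hasEigenvalue_of_hasEigenvector ⟨hy, hy0⟩
          have hμ1 : μ ≠ b := fun h => h₁ (h ▸ hμE)
          have hμ2 : μ ≠ -b := fun h => h₂ (h ▸ hμE)
          -- find z₀ with cosh(z₀ b) = sinh(z₀ b)/b * μ
          set r : ℂ := (μ : ℂ) / (b : ℂ) with hr
          have hr1 : r - 1 ≠ 0 := by
            rw [hr, div_sub_one hb0, div_ne_zero_iff, sub_ne_zero]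
            exact ⟨fun h => hμ1 (by exact_mod_cast h), hb0⟩
          have hr2 : r + 1 ≠ 0 := by
            rw [hr, div_add_one hb0, div_ne_zero_iff]
            refine ⟨fun h => hμ2 ?_, hb0⟩
            have : (μ : ℂ) = (-b : ℝ) := by push_cast; linear_combination h
            exact_mod_cast this
          have ht : (r + 1) / (r - 1) ≠ 0 := div_ne_zero hr2 hr1
          obtain ⟨u, hu⟩ : ∃ u : ℂ, Complex.exp u = (r + 1) / (r - 1) := by
            have : (r + 1) / (r - 1) ∈ Set.range Complex.exp := by
              rw [Complex.range_exp]; exact ht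
            exact this
          set z₀ : ℂ := u / 2 / (b : ℂ) with hz₀
          have hzb : z₀ * (b : ℂ) = u / 2 := by
            rw [hz₀, div_mul_cancel₀ _ hb0]
          have hexp : Complex.exp (u / 2) * Complex.exp (u / 2) = (r + 1) / (r - 1) := by
            rw [← Complex.exp_add, ← hu]; ring_nf
          have hvanish : Complex.cosh (z₀ * (b : ℂ)) - Complex.sinh (z₀ * (b : ℂ)) / (b : ℂ) * (μ : ℂ) = 0 := by
            have hrμ : Complex.sinh (z₀ * (b : ℂ)) / (b : ℂ) * (μ : ℂ)
                = Complex.sinh (z₀ * (b : ℂ)) * r := by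
              rw [hr]; ring
            have hinv : Complex.exp (-(u / 2)) * Complex.exp (u / 2) = 1 := by
              rw [← Complex.exp_add]; simp
            have hexp' : Complex.exp (u / 2) * Complex.exp (u / 2) * (r - 1) = r + 1 := by
              rw [hexp]; field_simp
            rw [hrμ, hzb, Complex.cosh, Complex.sinh]
            linear_combination (-(Complex.exp (-(u/2)))/2) * hexp'
              + (-(Complex.exp (u/2) * (1 - r))/2) * hinv
          -- membership in the kernel for z₀
          refine Submodule.mem_iSup_of_mem z₀ ?_
          rw [LinearMap.mem_ker, LinearMap.sub_apply, LinearMap.smul_apply, LinearMap.smul_apply,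
            Module.End.one_apply, LinearMap.baseChange_tmul]
          have hAy : A y = μ • y := Module.End.mem_eigenspace_iff.mp hy
          rw [hAy, TensorProduct.tmul_smul, ← algebraMap_smul ℂ μ (z ⊗ₜ[ℝ] y),
            Complex.coe_algebraMap, smul_smul, ← sub_smul]
          rw [hvanish, zero_smul]
      · simp
      · intro y₁ y₂ hy₁ hy₂
        rw [TensorProduct.tmul_add]
        exact Submodule.add_mem _ hy₁ hy₂
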